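/- Let (X, τ) be a real topological vector space and F : X → [-∞,+∞]. Then the lower semicontinuous envelope of the level convex envelope of F equals the lower semicontinuous level convex envelope of F, i.e. Γ_τ(F^{lc}) = F^{lslc} pointwise, and moreover F^{lslc} ≤ (Γ_τ(F))^{lc} pointwise. -/

import Mathlib

open Filter Topology

variable {X : Type*}

/-- A function into the extended reals is level convex if along segments its value
is at most the maximum of the values at the endpoints. -/
def LevelConvex [AddCommGroup X] [Module ℝ X] (F : X → EReal) : Prop :=
  ∀ x y : X, ∀ t : ℝ, 0 < t → t < 1 →
    F (t • x + (1 - t) • y) ≤ max (F x) (F y)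

/-- The lower semicontinuous envelope `Γ_τ(F)`: the pointwise supremum of all
lower semicontinuous functions below `F`. -/
noncomputable def lscEnv [TopologicalSpace X] (F : X → EReal) : X → EReal :=
  fun x => ⨆ G : {G : X → EReal // LowerSemicontinuous G ∧ G ≤ F}, (G : X → EReal) x

/-- The level convex envelope `F^{lc}`: the pointwise supremum of all level convex
functions below `F`. -/
noncomputable def lcEnv [AddCommGroup X] [Module ℝ X] (F : X → EReal) : X → EReal :=
  fun x => ⨆ G : {G : X → EReal // LevelConvex G ∧ G ≤ F}, (G : X → EReal) x

/-- The lower semicontinuous level convex envelope `F^{lslc}`: the pointwise supremum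
of all functions below `F` which are both lower semicontinuous and level convex. -/
noncomputable def lslcEnv [TopologicalSpace X] [AddCommGroup X] [Module ℝ X]
    (F : X → EReal) : X → EReal :=
  fun x => ⨆ G : {G : X → EReal // LowerSemicontinuous G ∧ LevelConvex G ∧ G ≤ F},
    (G : X → EReal) x

noncomputable def gEnv [TopologicalSpace X] (H : X → EReal) : X → EReal :=
  fun x => ⨆ U ∈ 𝓝 x, ⨅ y ∈ U, H y

lemma gEnv_le [TopologicalSpace X] (H : X → EReal) : gEnv H ≤ H :=
  fun x => iSup₂_le fun _ hU => iInf₂_le x (mem_of_mem_nhds hU)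

lemma lsc_gEnv [TopologicalSpace X] (H : X → EReal) : LowerSemicontinuous (gEnv H) := by
  intro x y hy
  rw [show gEnv H x = ⨆ U ∈ 𝓝 x, ⨅ y ∈ U, H y from rfl, gt_iff_lt, lt_iSup_iff] at hy
  obtain ⟨U, hU⟩ := hy
  rw [lt_iSup_iff] at hU
  obtain ⟨hUx, hlt⟩ := hU
  filter_upwards [interior_mem_nhds.mpr hUx] with x' hx'
  refine hlt.trans_le ?_
  calc ⨅ z ∈ U, H z ≤ ⨅ z ∈ interior U, H z := biInf_mono fun z hz => interior_subset hz
    _ ≤ gEnv H x' := le_iSup₂ (f := fun V (_ : V ∈ 𝓝 x') => ⨅ z ∈ V, H z)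
        (interior U) (isOpen_interior.mem_nhds hx')

lemma le_gEnv [TopologicalSpace X] {H g : X → EReal} (hg : LowerSemicontinuous g)
    (hgH : g ≤ H) : g ≤ gEnv H := by
  intro x
  refine le_of_forall_lt_imp_le_of_dense fun c hc => ?_
  have hU : {x' | c < g x'} ∈ 𝓝 x := hg x c hc
  calc c ≤ ⨅ z ∈ {x' | c < g x'}, H z := le_iInf₂ fun z hz => hz.le.trans (hgH z)
    _ ≤ gEnv H x := le_iSup₂ (f := fun V (_ : V ∈ 𝓝 x) => ⨅ z ∈ V, H z) _ hU

lemma levelConvex_gEnv [TopologicalSpace X] [AddCommGroup X] [Module ℝ X]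
    [IsTopologicalAddGroup X] [ContinuousSMul ℝ X] {H : X → EReal}
    (hH : LevelConvex H) : LevelConvex (gEnv H) := by
  intro x y t ht ht'
  refine iSup₂_le fun W hW => ?_
  -- continuity of the affine map
  have hcont : Continuous (fun p : X × X => t • p.1 + (1 - t) • p.2) :=
    (continuous_fst.const_smul t).add (continuous_snd.const_smul (1 - t))
  have htd : Tendsto (fun p : X × X => t • p.1 + (1 - t) • p.2) (𝓝 (x, y))
      (𝓝 (t • x + (1 - t) • y)) := hcont.tendsto (x, y)
  have hpre : (fun p : X × X => t • p.1 + (1 - t) • p.2) ⁻¹' W ∈ 𝓝 (x, y) := htd hW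
  rw [nhds_prod_eq, mem_prod_iff] at hpre
  obtain ⟨U, hU, V, hV, hUV⟩ := hpre
  have key : (⨅ z ∈ W, H z) ≤ max (⨅ z ∈ U, H z) (⨅ z ∈ V, H z) := by
    refine le_of_forall_gt_imp_ge_of_dense fun c hc => ?_
    have hUc : (⨅ z ∈ U, H z) < c := (le_max_left _ _).trans_lt hc
    have hVc : (⨅ z ∈ V, H z) < c := (le_max_right _ _).trans_lt hc
    simp only [iInf_lt_iff] at hUc hVc
    obtain ⟨u, hu, huc⟩ := hUc
    obtain ⟨v, hv, hvc⟩ := hVc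
    have hmem : t • u + (1 - t) • v ∈ W := hUV (Set.mk_mem_prod hu hv)
    calc (⨅ z ∈ W, H z) ≤ H (t • u + (1 - t) • v) := iInf₂_le _ hmem
      _ ≤ max (H u) (H v) := hH u v t ht ht'
      _ ≤ c := max_le huc.le hvc.le
  refine key.trans (max_le_max ?_ ?_)
  · exact le_iSup₂ (f := fun V (_ : V ∈ 𝓝 x) => ⨅ z ∈ V, H z) U hU
  · exact le_iSup₂ (f := fun W (_ : W ∈ 𝓝 y) => ⨅ z ∈ W, H z) V hV

lemma lscEnv_eq_gEnv [TopologicalSpace X] (H : X → EReal) : lscEnv H = gEnv H := by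
  funext x
  apply le_antisymm
  · exact iSup_le fun G => le_gEnv G.2.1 G.2.2 x
  · exact le_iSup (fun G : {G : X → EReal // LowerSemicontinuous G ∧ G ≤ H} =>
      (G : X → EReal) x) ⟨gEnv H, lsc_gEnv H, gEnv_le H⟩

lemma lscEnv_le [TopologicalSpace X] (H : X → EReal) : lscEnv H ≤ H :=
  fun x => iSup_le fun G => G.2.2 x

lemma lsc_lscEnv [TopologicalSpace X] (H : X → EReal) : LowerSemicontinuous (lscEnv H) := by
  rw [lscEnv_eq_gEnv]; exact lsc_gEnv H

lemma le_lscEnv [TopologicalSpace X] {H g : X → EReal} (hg : LowerSemicontinuous g)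
    (hgH : g ≤ H) : g ≤ lscEnv H :=
  fun x => le_iSup (fun G : {G : X → EReal // LowerSemicontinuous G ∧ G ≤ H} =>
    (G : X → EReal) x) ⟨g, hg, hgH⟩

lemma lcEnv_le [AddCommGroup X] [Module ℝ X] (F : X → EReal) : lcEnv F ≤ F :=
  fun x => iSup_le fun G => G.2.2 x

lemma le_lcEnv [AddCommGroup X] [Module ℝ X] {F g : X → EReal} (hg : LevelConvex g)
    (hgF : g ≤ F) : g ≤ lcEnv F :=
  fun x => le_iSup (fun G : {G : X → EReal // LevelConvex G ∧ G ≤ F} =>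
    (G : X → EReal) x) ⟨g, hg, hgF⟩

lemma levelConvex_lcEnv [AddCommGroup X] [Module ℝ X] (F : X → EReal) :
    LevelConvex (lcEnv F) := by
  intro x y t ht ht'
  refine iSup_le fun G => (G.2.1 x y t ht ht').trans (max_le_max ?_ ?_)
  · exact le_iSup (fun G : {G : X → EReal // LevelConvex G ∧ G ≤ F} =>
      (G : X → EReal) x) G
  · exact le_iSup (fun G : {G : X → EReal // LevelConvex G ∧ G ≤ F} =>
      (G : X → EReal) y) G


/-- `Γ_τ(F^{lc}) = F^{lslc}` and `F^{lslc} ≤ (Γ_τ(F))^{lc}`. -/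
theorem stmt0 [TopologicalSpace X] [AddCommGroup X] [Module ℝ X]
    [IsTopologicalAddGroup X] [ContinuousSMul ℝ X] (F : X → EReal) :
    lscEnv (lcEnv F) = lslcEnv F ∧ lslcEnv F ≤ lcEnv (lscEnv F) := by
  have hlc : LevelConvex (lscEnv (lcEnv F)) := by
    rw [lscEnv_eq_gEnv]; exact levelConvex_gEnv (levelConvex_lcEnv F)
  constructor
  · funext x
    apply le_antisymm
    · exact le_iSup (fun G : {G : X → EReal //
        LowerSemicontinuous G ∧ LevelConvex G ∧ G ≤ F} => (G : X → EReal) x)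
        ⟨lscEnv (lcEnv F), lsc_lscEnv _, hlc, fun z => (lscEnv_le _ z).trans (lcEnv_le F z)⟩
    · exact iSup_le fun G => le_lscEnv G.2.1 (le_lcEnv G.2.2.1 G.2.2.2) x
  · intro x
    exact iSup_le fun G => le_lcEnv G.2.2.1 (le_lscEnv G.2.1 G.2.2.2) x
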